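/- Let π be a finitely generated group and ρ, ρ̃ : π → SL(2,ℂ) representations with ρ irreducible. If tr(ρ̃(g)) = tr(ρ(g)) for every g ∈ π, then ρ̃ = τ ∘ ρ for some inner automorphism τ of GL(2,ℂ), i.e., ρ̃ is GL(2,ℂ)-conjugate to ρ. -/

import Mathlib

open Matrix

namespace Stmt16Aux

abbrev M2 := Matrix (Fin 2) (Fin 2) ℂ
abbrev V2 := Fin 2 → ℂ


lemma ext_mulVec {A B : M2} (h : ∀ x : V2, A.mulVec x = B.mulVec x) : A = B := by
  ext i j
  have := congrFun (h (Pi.single j 1)) i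
  simpa [Matrix.mulVec_single] using this

/-- column matrix with columns u, w -/
def cm (u w : V2) : M2 := Matrix.of ![![u 0, w 0], ![u 1, w 1]]

lemma cm_mulVec (u w : V2) (x : V2) : (cm u w).mulVec x = x 0 • u + x 1 • w := by
  funext i
  fin_cases i <;> simp [cm, Matrix.mulVec, dotProduct, Fin.sum_univ_two] <;> ring

lemma vec_eq (x : V2) : x = x 0 • (Pi.single 0 1 : V2) + x 1 • (Pi.single 1 1 : V2) := by
  funext i
  fin_cases i <;> simp

lemma cm_isUnit {u w : V2} (h : ∀ a b : ℂ, a • u + b • w = 0 → a = 0 ∧ b = 0) :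
    IsUnit (cm u w).det := by
  rw [isUnit_iff_ne_zero]
  intro hd
  obtain ⟨x, hx, h0⟩ := (Matrix.exists_mulVec_eq_zero_iff).2 hd
  rw [cm_mulVec] at h0
  obtain ⟨h1, h2⟩ := h _ _ h0
  exact hx (by funext i; fin_cases i <;> simp [h1, h2])

lemma trace_eq_two_of_fixed (A : M2) (hd : A.det = 1) (v : V2) (hv : v ≠ 0)
    (h : A.mulVec v = v) : A.trace = 2 := by
  have h0 : (A - 1).mulVec v = 0 := by
    rw [Matrix.sub_mulVec, h, Matrix.one_mulVec, sub_self]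
  have hdet : (A - 1).det = 0 := by
    rw [← Matrix.exists_mulVec_eq_zero_iff]
    exact ⟨v, hv, h0⟩
  have : (A - 1).det = A.det - A.trace + 1 := by
    simp [Matrix.det_fin_two, Matrix.trace_fin_two, Matrix.sub_apply, Matrix.one_apply]
    ring
  rw [this, hd] at hdet
  linear_combination -hdet



lemma right_inv_eq (X Y : M2) (hdet : X.det = 1) (h : X * Y = 1) :
    Y = !![X 1 1, -(X 0 1); -(X 1 0), X 0 0] := by
  have h1 : X⁻¹ = Y := Matrix.inv_eq_right_inv h
  rw [← h1, Matrix.inv_def, hdet, Matrix.adjugate_fin_two]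
  simp



lemma core_diag (lam mu p q r s : ℂ) (hlm : lam * mu = 1) (hne : lam ≠ mu)
    (hdet : p * s - q * r = 1)
    (htr : (!![lam,0;0,mu] * !![p,q;r,s] * !![mu,0;0,lam] * !![s,-q;-r,p] : M2).trace = 2) :
    q * r = 0 := by
  simp only [Matrix.mul_fin_two, Matrix.trace_fin_two_of] at htr
  have key : (lam - mu)^2 * (q * r) = 0 := by
    linear_combination -htr + 2*hdet - 2*q*r*hlm + 2*p*s*hlm
  rcases mul_eq_zero.1 key with h | h
  · exact absurd (pow_eq_zero_iff (by norm_num) |>.1 h) (sub_ne_zero.2 hne)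
  · exact h

lemma core_unip (e p q r s : ℂ) (he : e^2 = 1) (hdet : p * s - q * r = 1)
    (htr : (!![e,e;0,e] * !![p,q;r,s] * !![e,-e;0,e] * !![s,-q;-r,p] : M2).trace = 2) :
    r = 0 := by
  simp only [Matrix.mul_fin_two, Matrix.trace_fin_two_of] at htr
  have key : r^2 = 0 := by
    linear_combination htr - (2*p*s - 2*q*r + r^2)*he - 2*hdet
  exact pow_eq_zero_iff (by norm_num) |>.1 key



/-- the linear map `A ↦ A.mulVec v` -/
noncomputable def mByV (v : V2) : M2 →ₗ[ℂ] V2 where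
  toFun A := A.mulVec v
  map_add' A B := Matrix.add_mulVec A B v
  map_smul' c A := by simp [Matrix.smul_mulVec]



variable {π : Type*} [Group π]

def Red (ρ : π →* Matrix.SpecialLinearGroup (Fin 2) ℂ) : Prop :=
  ∃ v : V2, v ≠ 0 ∧ ∀ g : π, ∃ c : ℂ, Matrix.mulVec (ρ g : M2) v = c • v

lemma sl_coe_mul (ρ : π →* Matrix.SpecialLinearGroup (Fin 2) ℂ) (g h : π) :
    (ρ (g * h) : M2) = (ρ g : M2) * (ρ h : M2) := by rw [_root_.map_mul]; rfl

lemma sl_det (ρ : π →* Matrix.SpecialLinearGroup (Fin 2) ℂ) (g : π) :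
    ((ρ g : M2)).det = 1 := (ρ g).2

variable (ρ ρ' : π →* Matrix.SpecialLinearGroup (Fin 2) ℂ)


lemma red_of_invariant (W : Submodule ℂ V2)
    (hW : ∀ g : π, ∀ x ∈ W, (ρ g : M2).mulVec x ∈ W)
    (h1 : W ≠ ⊥) (h2 : W ≠ ⊤) : Red ρ := by
  obtain ⟨v, hvW, hv0⟩ := Submodule.exists_mem_ne_zero_of_ne_bot h1
  have hsp : Submodule.span ℂ {v} ≤ W := by
    rw [Submodule.span_le]; simpa using hvW
  have hfr1 : Module.finrank ℂ (Submodule.span ℂ {v}) = 1 :=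
    finrank_span_singleton hv0
  have hle2 : Module.finrank ℂ W ≤ 2 := by
    have := Submodule.finrank_le W
    simpa using this
  have hge1 : 1 ≤ Module.finrank ℂ W := by
    have := Submodule.finrank_mono hsp
    omega
  have hne2 : Module.finrank ℂ W ≠ 2 := by
    intro h
    apply h2
    apply Submodule.eq_top_of_finrank_eq
    simpa using h
  have hfr : Module.finrank ℂ W = 1 := by omega
  have hWsp : Submodule.span ℂ {v} = W :=
    Submodule.eq_of_le_of_finrank_le hsp (by omega)
  refine ⟨v, hv0, fun g => ?_⟩
  have : (ρ g : M2).mulVec v ∈ Submodule.span ℂ {v} := by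
    rw [hWsp]; exact hW g v hvW
  obtain ⟨c, hc⟩ := Submodule.mem_span_singleton.1 this
  exact ⟨c, hc.symm⟩

lemma schur (hirr : ¬ Red ρ) (T : M2)
    (hT : ∀ g : π, (ρ g : M2) * T = T * (ρ g : M2)) : ∃ c : ℂ, T = c • 1 := by
  obtain ⟨c, hc⟩ := Module.End.exists_eigenvalue (Matrix.mulVecLin T)
  obtain ⟨v, hv⟩ := hc.exists_hasEigenvector
  refine ⟨c, ?_⟩
  set W := Module.End.eigenspace (Matrix.mulVecLin T) c with hWdef
  have hmem : ∀ x : V2, x ∈ W ↔ T.mulVec x = c • x := by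
    intro x
    rw [Module.End.mem_eigenspace_iff]
    simp [Matrix.mulVecLin_apply]
  have hinv : ∀ g : π, ∀ x ∈ W, (ρ g : M2).mulVec x ∈ W := by
    intro g x hx
    rw [hmem] at hx ⊢
    rw [Matrix.mulVec_mulVec, ← hT g, ← Matrix.mulVec_mulVec, hx,
      Matrix.mulVec_smul]
  have hWne : W ≠ ⊥ := by
    intro h
    have hm : v ∈ W := hv.1
    rw [h] at hm
    exact hv.2 (by simpa using hm)
  have hWtop : W = ⊤ := by
    by_contra h
    exact hirr (red_of_invariant ρ W hinv hWne h)
  apply ext_mulVec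
  intro x
  have hx : x ∈ W := hWtop ▸ Submodule.mem_top
  rw [hmem] at hx
  rw [hx, Matrix.smul_mulVec, Matrix.one_mulVec]



lemma span_top (hirr : ¬ Red ρ) (X : M2) :
    X ∈ Submodule.span ℂ (Set.range fun g : π => (ρ g : M2)) := by
  set S := Submodule.span ℂ (Set.range fun g : π => (ρ g : M2)) with hS
  have hmem : ∀ g : π, (ρ g : M2) ∈ S := fun g =>
    Submodule.subset_span ⟨g, rfl⟩
  have hone : (1 : M2) ∈ S := by
    have : ((ρ 1 : Matrix.SpecialLinearGroup (Fin 2) ℂ) : M2) = 1 := by simp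
    rw [← this]; exact hmem 1
  have hmul : ∀ g : π, ∀ A ∈ S, (ρ g : M2) * A ∈ S := by
    intro g A hA
    induction hA using Submodule.span_induction with
    | mem x hx =>
      obtain ⟨h, rfl⟩ := hx
      have : (ρ g : M2) * (ρ h : M2) = (ρ (g * h) : M2) := by
        rw [_root_.map_mul]
        rfl
      rw [this]; exact hmem _
    | zero => simpa using Submodule.zero_mem S
    | add x y _ _ hx hy => rw [mul_add]; exact Submodule.add_mem S hx hy
    | smul c x _ hx => rw [mul_smul_comm]; exact Submodule.smul_mem S c hx
  set e0 : V2 := Pi.single 0 1 with he0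
  set e1 : V2 := Pi.single 1 1 with he1
  set φ : M2 →ₗ[ℂ] V2 × V2 := (mByV e0).prod (mByV e1) with hφ
  set N : Submodule ℂ (V2 × V2) := S.map φ with hN
  have hNmem : ∀ A ∈ S, (A.mulVec e0, A.mulVec e1) ∈ N :=
    fun A hA => ⟨A, hA, rfl⟩
  have hNinv : ∀ g : π, ∀ z ∈ N,
      ((ρ g : M2).mulVec z.1, (ρ g : M2).mulVec z.2) ∈ N := by
    rintro g z ⟨A, hA, rfl⟩
    refine ⟨(ρ g : M2) * A, hmul g A hA, ?_⟩
    simp only [hφ, LinearMap.prod_apply, Function.prod, mByV, LinearMap.coe_mk, AddHom.coe_mk]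
    rw [← Matrix.mulVec_mulVec, ← Matrix.mulVec_mulVec]
  -- second projection is everything
  have hp2 : ∀ y : V2, ∃ x : V2, (x, y) ∈ N := by
    set p2 : Submodule ℂ V2 := N.map (LinearMap.snd ℂ V2 V2) with hp2def
    have hinv : ∀ g : π, ∀ y ∈ p2, (ρ g : M2).mulVec y ∈ p2 := by
      rintro g y ⟨z, hz, rfl⟩
      exact ⟨_, hNinv g z hz, rfl⟩
    have he1mem : e1 ∈ p2 := by
      refine ⟨(e0, e1), ?_, rfl⟩
      have := hNmem 1 hone
      simpa using this
    have hne : p2 ≠ ⊥ := by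
      intro h
      rw [h] at he1mem
      have h0 : e1 = 0 := by simpa using he1mem
      have := congrFun h0 1
      simp [he1] at this
    have htop : p2 = ⊤ := by
      by_contra h
      exact hirr (red_of_invariant ρ p2 hinv hne h)
    intro y
    have : y ∈ p2 := htop ▸ Submodule.mem_top
    obtain ⟨z, hz, hsnd⟩ := Submodule.mem_map.1 this
    subst hsnd
    exact ⟨z.1, by simpa using hz⟩
  -- the kernel submodule K
  set K : Submodule ℂ V2 := N.comap (LinearMap.inl ℂ V2 V2) with hK
  have hKmem : ∀ x : V2, x ∈ K ↔ (x, (0:V2)) ∈ N := fun x => Iff.rfl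
  have hKinv : ∀ g : π, ∀ x ∈ K, (ρ g : M2).mulVec x ∈ K := by
    intro g x hx
    rw [hKmem] at hx ⊢
    have := hNinv g _ hx
    simpa using this
  by_cases hKbot : K = ⊥
  · -- leads to contradiction with irreducibility
    exfalso
    have huniq : ∀ (x₁ x₂ y : V2), (x₁, y) ∈ N → (x₂, y) ∈ N → x₁ = x₂ := by
      intro x₁ x₂ y h1 h2
      have : (x₁ - x₂, (0:V2)) ∈ N := by
        have := Submodule.sub_mem N h1 h2
        simpa using this
      have : x₁ - x₂ ∈ K := by rwa [hKmem]
      rw [hKbot] at this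
      have := Submodule.mem_bot (R := ℂ) |>.1 this
      exact sub_eq_zero.1 this
    obtain ⟨t0, ht0⟩ := hp2 e0
    obtain ⟨t1, ht1⟩ := hp2 e1
    set T : M2 := cm t0 t1 with hT
    have hTN : ∀ y : V2, (T.mulVec y, y) ∈ N := by
      intro y
      have : (T.mulVec y, y) = y 0 • ((t0, e0) : V2 × V2) + y 1 • (t1, e1) := by
        rw [hT, cm_mulVec t0 t1 y]
        rw [Prod.smul_mk, Prod.smul_mk, Prod.mk_add_mk]
        exact Prod.ext rfl (vec_eq y)
      rw [this]
      exact Submodule.add_mem N (Submodule.smul_mem N _ ht0) (Submodule.smul_mem N _ ht1)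
    have hcomm : ∀ g : π, (ρ g : M2) * T = T * (ρ g : M2) := by
      intro g
      apply ext_mulVec
      intro x
      rw [← Matrix.mulVec_mulVec, ← Matrix.mulVec_mulVec]
      have h1 : ((ρ g : M2).mulVec (T.mulVec x), (ρ g : M2).mulVec x) ∈ N := by
        have := hNinv g _ (hTN x)
        simpa using this
      have h2 : (T.mulVec ((ρ g : M2).mulVec x), (ρ g : M2).mulVec x) ∈ N :=
        hTN _
      exact huniq _ _ _ h1 h2
    obtain ⟨c, hc⟩ := schur ρ hirr T hcomm
    have h1 : (e0, e1) ∈ N := by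
      have := hNmem 1 hone
      simpa using this
    have h2 : T.mulVec e1 = e0 := huniq _ _ _ (hTN e1) h1
    rw [hc, Matrix.smul_mulVec, Matrix.one_mulVec] at h2
    have := congrFun h2 0
    simp [he0, he1] at this
  · -- K must be ⊤
    have hKtop : K = ⊤ := by
      by_contra h
      exact hirr (red_of_invariant ρ K hKinv hKbot h)
    have hNtop : ∀ z : V2 × V2, z ∈ N := by
      rintro ⟨x, y⟩
      obtain ⟨x', hx'⟩ := hp2 y
      have hk : (x - x', (0:V2)) ∈ N := by
        have : x - x' ∈ K := hKtop ▸ Submodule.mem_top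
        rwa [hKmem] at this
      have := Submodule.add_mem N hx' hk
      simpa using this
    obtain ⟨A, hA, hAeq⟩ := hNtop (X.mulVec e0, X.mulVec e1)
    have : A = X := by
      have h0 : A.mulVec e0 = X.mulVec e0 := congrArg Prod.fst hAeq
      have h1 : A.mulVec e1 = X.mulVec e1 := congrArg Prod.snd hAeq
      ext i j
      fin_cases j
      · have := congrFun h0 i
        simpa [he0, Matrix.mulVec_single] using this
      · have := congrFun h1 i
        simpa [he1, Matrix.mulVec_single] using this
    rwa [← this]



/-- trace nondegeneracy against the span of an irreducible image -/
lemma nondeg (hirr : ¬ Red ρ) (X : M2)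
    (h : ∀ g : π, (X * (ρ g : M2)).trace = 0) : X = 0 := by
  have hall : ∀ Y : M2, (X * Y).trace = 0 := by
    intro Y
    have hY := span_top ρ hirr Y
    induction hY using Submodule.span_induction with
    | mem y hy => obtain ⟨g, rfl⟩ := hy; exact h g
    | zero => simp
    | add y z _ _ hy hz => rw [mul_add, Matrix.trace_add, hy, hz, add_zero]
    | smul c y _ hy => rw [mul_smul_comm, Matrix.trace_smul, hy, smul_zero]
  ext i j
  have := hall (Matrix.single j i 1)
  rw [Matrix.trace_fin_two] at this
  fin_cases i <;> fin_cases j <;>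
    simpa [Matrix.mul_apply, Matrix.single, Fin.sum_univ_two] using this

lemma main_conj (hirr : ¬ Red ρ) (hirr' : ¬ Red ρ')
    (htr : ∀ g : π, ((ρ' g : M2)).trace = ((ρ g : M2)).trace) :
    ∃ T0 : M2, IsUnit T0.det ∧ ∀ g : π, (ρ' g : M2) * T0 = T0 * (ρ g : M2) := by
  classical
  set F : (π →₀ ℂ) →ₗ[ℂ] M2 := Finsupp.linearCombination ℂ (fun g : π => (ρ g : M2)) with hF
  set F' : (π →₀ ℂ) →ₗ[ℂ] M2 := Finsupp.linearCombination ℂ (fun g : π => (ρ' g : M2)) with hF'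
  have hFsurj : LinearMap.range F = ⊤ := by
    rw [hF, Finsupp.range_linearCombination]
    rw [Submodule.eq_top_iff']
    exact span_top ρ hirr
  -- trace compatibility
  have htc : ∀ (x : π →₀ ℂ) (h : π),
      ((F' x) * (ρ' h : M2)).trace = ((F x) * (ρ h : M2)).trace := by
    intro x
    induction x using Finsupp.induction_linear with
    | zero => intro h; simp
    | add x y hx hy =>
      intro h
      rw [map_add, map_add, add_mul, add_mul, Matrix.trace_add, Matrix.trace_add, hx, hy]
    | single a b =>
      intro h
      rw [hF, hF', Finsupp.linearCombination_single, Finsupp.linearCombination_single]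
      rw [smul_mul_assoc, smul_mul_assoc, Matrix.trace_smul, Matrix.trace_smul]
      congr 1
      have e1 : (ρ' a : M2) * (ρ' h : M2) = (ρ' (a * h) : M2) := by
        rw [_root_.map_mul]; rfl
      have e2 : (ρ a : M2) * (ρ h : M2) = (ρ (a * h) : M2) := by
        rw [_root_.map_mul]; rfl
      rw [e1, e2, htr]
  have hker : ∀ x : π →₀ ℂ, F x = 0 → F' x = 0 := by
    intro x hx
    apply nondeg ρ' hirr'
    intro h
    rw [htc x h, hx, zero_mul, Matrix.trace_zero]
  obtain ⟨σ, hσ⟩ := F.exists_rightInverse_of_surjective hFsurj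
  set Φ : M2 →ₗ[ℂ] M2 := F'.comp σ with hΦdef
  have hΦF : ∀ x : π →₀ ℂ, Φ (F x) = F' x := by
    intro x
    have h1 : F (σ (F x) - x) = 0 := by
      have : F (σ (F x)) = F x := by
        have := LinearMap.congr_fun hσ (F x)
        simpa using this
      rw [map_sub, this, sub_self]
    have h2 := hker _ h1
    rw [map_sub] at h2
    have : F' (σ (F x)) = F' x := by rwa [sub_eq_zero] at h2
    simpa [hΦdef] using this
  have hΦρ : ∀ g : π, Φ (ρ g : M2) = (ρ' g : M2) := by
    intro g
    have : ((ρ g : M2)) = F (Finsupp.single g 1) := by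
      rw [hF, Finsupp.linearCombination_single, one_smul]
    rw [this, hΦF, hF', Finsupp.linearCombination_single, one_smul]
  have hΦkey : ∀ (X : M2) (h : π), ((Φ X) * (ρ' h : M2)).trace = (X * (ρ h : M2)).trace := by
    intro X h
    obtain ⟨x, rfl⟩ : ∃ x, F x = X := by
      have := hFsurj ▸ Submodule.mem_top (R := ℂ) (x := X)
      exact this
    rw [hΦF, htc]
  have hΦinj : ∀ X : M2, Φ X = 0 → X = 0 := by
    intro X hX
    apply nondeg ρ hirr
    intro h
    rw [← hΦkey X h, hX, zero_mul, Matrix.trace_zero]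
  have hΦmul : ∀ X Y : M2, Φ (X * Y) = Φ X * Φ Y := by
    intro X Y
    have hX := span_top ρ hirr X
    induction hX using Submodule.span_induction with
    | mem x hx =>
      obtain ⟨g, rfl⟩ := hx
      have hY := span_top ρ hirr Y
      induction hY using Submodule.span_induction with
      | mem y hy =>
        obtain ⟨h, rfl⟩ := hy
        have e2 : (ρ g : M2) * (ρ h : M2) = (ρ (g * h) : M2) := by
          rw [_root_.map_mul]; rfl
        have e3 : (ρ' g : M2) * (ρ' h : M2) = (ρ' (g * h) : M2) := by
          rw [_root_.map_mul]; rfl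
        rw [e2, hΦρ, hΦρ, hΦρ, e3]
      | zero => simp
      | add y z _ _ hy hz => rw [mul_add, map_add, hy, hz, map_add, mul_add]
      | smul c y _ hy => rw [mul_smul_comm, _root_.map_smul, hy, _root_.map_smul, mul_smul_comm]
    | zero => simp
    | add x z _ _ hx hz => rw [add_mul, map_add, hx, hz, map_add, add_mul]
    | smul c x _ hx => rw [smul_mul_assoc, _root_.map_smul, hx, _root_.map_smul, smul_mul_assoc]
  -- matrix units
  set E : Fin 2 → Fin 2 → M2 := fun i j => Matrix.single i j 1 with hE
  have hEmul : ∀ i j k l, j = k → E i j * E k l = E i l := by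
    intro i j k l h; subst h
    rw [hE]; simp
  have hEmul0 : ∀ i j k l, j ≠ k → E i j * E k l = 0 := by
    intro i j k l h
    rw [hE]; exact Matrix.single_mul_single_of_ne _ _ j k h 1
  -- find v with Φ(E00) v = v ≠ 0
  have hP0 : Φ (E 0 0) ≠ 0 := by
    intro h
    have := hΦinj _ h
    have := congrFun (congrFun this 0) 0
    simp [hE, Matrix.single] at this
  obtain ⟨w, hw⟩ : ∃ w : V2, (Φ (E 0 0)).mulVec w ≠ 0 := by
    by_contra h
    push_neg at h
    apply hP0
    apply ext_mulVec
    intro x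
    rw [h x, Matrix.zero_mulVec]
  set v : V2 := (Φ (E 0 0)).mulVec w with hv
  have hPv : (Φ (E 0 0)).mulVec v = v := by
    rw [hv, Matrix.mulVec_mulVec, ← hΦmul, hEmul 0 0 0 0 rfl]
  set u : V2 := (Φ (E 1 0)).mulVec v with hu
  -- col : Fin 2 → V2
  set col : Fin 2 → V2 := ![v, u] with hcol
  have hcolv : ∀ k, col k = (Φ (E k 0)).mulVec v := by
    intro k
    fin_cases k
    · simpa [hcol] using hPv.symm
    · simp [hcol, hu]
  have hkey : ∀ i j k, (Φ (E i j)).mulVec (col k) =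
      if j = k then col i else 0 := by
    intro i j k
    rw [hcolv k, Matrix.mulVec_mulVec, ← hΦmul]
    by_cases h : j = k
    · rw [hEmul i j k 0 h, if_pos h, hcolv i]
    · rw [hEmul0 i j k 0 h, if_neg h, map_zero, Matrix.zero_mulVec]
  have hvne : v ≠ 0 := hw
  have hune : u ≠ 0 := by
    intro h
    have := hkey 0 1 1
    rw [if_pos rfl] at this
    have h2 : (Φ (E 0 1)).mulVec (col 1) = col 0 := this
    rw [show col 1 = u from rfl, h, Matrix.mulVec_zero] at h2
    exact hvne (by rw [show col 0 = v from rfl] at h2; exact h2.symm)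
  have hindep : ∀ a b : ℂ, a • v + b • u = 0 → a = 0 ∧ b = 0 := by
    intro a b hab
    have h1 : (Φ (E 0 0)).mulVec (a • v + b • u) = a • v := by
      rw [Matrix.mulVec_add, Matrix.mulVec_smul, Matrix.mulVec_smul, hPv]
      have : (Φ (E 0 0)).mulVec u = 0 := by
        have := hkey 0 0 1
        rw [if_neg (by decide)] at this
        exact this
      rw [this, smul_zero, add_zero]
    rw [hab, Matrix.mulVec_zero] at h1
    have ha : a = 0 := by
      by_contra h
      exact hvne (by
        have := congrArg (fun x => a⁻¹ • x) h1.symm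
        simpa [smul_smul, inv_mul_cancel₀ h] using this)
    refine ⟨ha, ?_⟩
    rw [ha, zero_smul, zero_add] at hab
    by_contra h
    exact hune (by
      have := congrArg (fun x => b⁻¹ • x) hab
      simpa [smul_smul, inv_mul_cancel₀ h] using this)
  set T0 : M2 := cm v u with hT0
  have hdet : IsUnit T0.det := cm_isUnit hindep
  have hT0col : ∀ k : Fin 2, T0.mulVec (Pi.single k 1) = col k := by
    intro k
    rw [hT0, cm_mulVec]
    fin_cases k <;> simp [hcol]
  -- the key intertwining on basis matrices
  have base : ∀ i j, Φ (E i j) * T0 = T0 * E i j := by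
    intro i j
    apply ext_mulVec
    intro x
    rw [← Matrix.mulVec_mulVec, ← Matrix.mulVec_mulVec]
    have l3 : ∀ k : Fin 2, (E i j).mulVec (Pi.single k 1)
        = if j = k then Pi.single i 1 else 0 := by
      intro k
      funext l
      rw [hE]
      by_cases h : j = k <;>
        simp [Matrix.mulVec_single, Matrix.single, h, Pi.single_apply, eq_comm]
    have l1 : T0.mulVec x = x 0 • col 0 + x 1 • col 1 := by
      conv_lhs => rw [vec_eq x]
      rw [Matrix.mulVec_add, Matrix.mulVec_smul, Matrix.mulVec_smul, hT0col 0, hT0col 1]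
    have l2 : (E i j).mulVec x = x 0 • (if j = 0 then Pi.single i 1 else (0:V2))
        + x 1 • (if j = 1 then Pi.single i 1 else (0:V2)) := by
      conv_lhs => rw [vec_eq x]
      rw [Matrix.mulVec_add, Matrix.mulVec_smul, Matrix.mulVec_smul, l3 0, l3 1]
    have l4 : ∀ k : Fin 2, T0.mulVec (if j = k then Pi.single i 1 else 0)
        = if j = k then col i else 0 := by
      intro k
      by_cases h : j = k <;> simp [h, hT0col i, Matrix.mulVec_zero]
    rw [l1, l2]
    rw [Matrix.mulVec_add, Matrix.mulVec_smul, Matrix.mulVec_smul,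
        Matrix.mulVec_add, Matrix.mulVec_smul, Matrix.mulVec_smul]
    rw [hkey i j 0, hkey i j 1, l4 0, l4 1]
  -- extend to all matrices
  have hMain : ∀ X : M2, Φ X * T0 = T0 * X := by
    have hL : ((LinearMap.mulRight ℂ T0).comp Φ) = (LinearMap.mulLeft ℂ T0) := by
      apply (Matrix.stdBasis ℂ (Fin 2) (Fin 2)).ext
      rintro ⟨i, j⟩
      rw [Matrix.stdBasis_eq_single]
      simpa [LinearMap.mulRight_apply, LinearMap.mulLeft_apply] using base i j
    intro X
    have := LinearMap.congr_fun hL X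
    simpa [LinearMap.mulRight_apply, LinearMap.mulLeft_apply] using this
  exact ⟨T0, hdet, fun g => by rw [← hΦρ g, hMain]⟩



variable (P : M2) (hP : IsUnit P.det)

/-- conjugated representation (as matrix-valued function) -/
noncomputable def mconj (g : π) : M2 := P⁻¹ * (ρ g : M2) * P

include hP in
lemma mconj_mul (g h : π) : mconj ρ P g * mconj ρ P h = mconj ρ P (g * h) := by
  unfold mconj
  rw [sl_coe_mul]
  have h1 : P * P⁻¹ = 1 := Matrix.mul_nonsing_inv P hP
  calc P⁻¹ * (ρ g : M2) * P * (P⁻¹ * (ρ h : M2) * P)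
      = P⁻¹ * (ρ g : M2) * (P * P⁻¹) * (ρ h : M2) * P := by
        noncomm_ring
    _ = P⁻¹ * ((ρ g : M2) * (ρ h : M2)) * P := by rw [h1]; noncomm_ring

lemma mconj_one : mconj ρ P 1 = P⁻¹ * P := by
  unfold mconj
  have : ((ρ 1 : Matrix.SpecialLinearGroup (Fin 2) ℂ) : M2) = 1 := by simp
  rw [this, mul_one]

include hP in
lemma mconj_det (g : π) : (mconj ρ P g).det = 1 := by
  unfold mconj
  rw [Matrix.det_mul, Matrix.det_mul, sl_det]
  rw [mul_one, ← Matrix.det_mul, Matrix.nonsing_inv_mul P hP, Matrix.det_one]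

include hP in
lemma mconj_inv (g : π) : mconj ρ P g⁻¹ =
    !![mconj ρ P g 1 1, -(mconj ρ P g 0 1); -(mconj ρ P g 1 0), mconj ρ P g 0 0] := by
  apply right_inv_eq _ _ (mconj_det ρ P hP g)
  rw [mconj_mul ρ P hP, mul_inv_cancel, mconj_one, Matrix.nonsing_inv_mul P hP]

include hP in
lemma mconj_trace_comm (hc : ∀ g h : π, ((ρ (g * h * g⁻¹ * h⁻¹) : M2)).trace = 2)
    (g h : π) :
    (mconj ρ P g * mconj ρ P h * mconj ρ P g⁻¹ * mconj ρ P h⁻¹).trace = 2 := by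
  rw [mconj_mul ρ P hP, mconj_mul ρ P hP, mconj_mul ρ P hP]
  unfold mconj
  rw [Matrix.trace_mul_cycle, Matrix.mul_nonsing_inv P hP, one_mul]
  exact hc g h

include hP in
lemma red_of_upper (h : ∀ g : π, mconj ρ P g 1 0 = 0) : Red ρ := by
  set v : V2 := P.mulVec (Pi.single 0 1) with hv
  have hvne : v ≠ 0 := by
    intro h0
    have h1 : P⁻¹.mulVec v = Pi.single 0 1 := by
      rw [hv, Matrix.mulVec_mulVec, Matrix.nonsing_inv_mul P hP, Matrix.one_mulVec]
    rw [h0, Matrix.mulVec_zero] at h1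
    have := congrFun h1 0
    simp at this
  refine ⟨v, hvne, fun g => ⟨mconj ρ P g 0 0, ?_⟩⟩
  have hsplit : (ρ g : M2) = P * mconj ρ P g * P⁻¹ := by
    unfold mconj
    have h1 : P * P⁻¹ = 1 := Matrix.mul_nonsing_inv P hP
    calc (ρ g : M2) = (P * P⁻¹) * (ρ g : M2) * (P * P⁻¹) := by rw [h1]; noncomm_ring
      _ = P * (P⁻¹ * (ρ g : M2) * P) * P⁻¹ := by noncomm_ring
  have hin : P⁻¹.mulVec (P.mulVec (Pi.single 0 1)) = Pi.single 0 1 := by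
    rw [Matrix.mulVec_mulVec, Matrix.nonsing_inv_mul P hP, Matrix.one_mulVec]
  rw [hsplit, hv, ← Matrix.mulVec_mulVec, ← Matrix.mulVec_mulVec, hin]
  have hcol : (mconj ρ P g).mulVec (Pi.single 0 1) = (mconj ρ P g 0 0) • (Pi.single 0 1 : V2) := by
    funext l
    rw [Matrix.mulVec_single]
    fin_cases l <;> simp [h g, Pi.single_apply]
  rw [hcol, Matrix.mulVec_smul]

include hP in
lemma red_of_lower (h : ∀ g : π, mconj ρ P g 0 1 = 0) : Red ρ := by
  set v : V2 := P.mulVec (Pi.single 1 1) with hv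
  have hvne : v ≠ 0 := by
    intro h0
    have h1 : P⁻¹.mulVec v = Pi.single 1 1 := by
      rw [hv, Matrix.mulVec_mulVec, Matrix.nonsing_inv_mul P hP, Matrix.one_mulVec]
    rw [h0, Matrix.mulVec_zero] at h1
    have := congrFun h1 1
    simp at this
  refine ⟨v, hvne, fun g => ⟨mconj ρ P g 1 1, ?_⟩⟩
  have hsplit : (ρ g : M2) = P * mconj ρ P g * P⁻¹ := by
    unfold mconj
    have h1 : P * P⁻¹ = 1 := Matrix.mul_nonsing_inv P hP
    calc (ρ g : M2) = (P * P⁻¹) * (ρ g : M2) * (P * P⁻¹) := by rw [h1]; noncomm_ring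
      _ = P * (P⁻¹ * (ρ g : M2) * P) * P⁻¹ := by noncomm_ring
  have hin : P⁻¹.mulVec (P.mulVec (Pi.single 1 1)) = Pi.single 1 1 := by
    rw [Matrix.mulVec_mulVec, Matrix.nonsing_inv_mul P hP, Matrix.one_mulVec]
  rw [hsplit, hv, ← Matrix.mulVec_mulVec, ← Matrix.mulVec_mulVec, hin]
  have hcol : (mconj ρ P g).mulVec (Pi.single 1 1) = (mconj ρ P g 1 1) • (Pi.single 1 1 : V2) := by
    funext l
    rw [Matrix.mulVec_single]
    fin_cases l <;> simp [h g, Pi.single_apply]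
  rw [hcol, Matrix.mulVec_smul]

include hP in
lemma mconj_of_colact (g : π) (B : M2) (hact : (ρ g : M2) * P = P * B) :
    mconj ρ P g = B := by
  unfold mconj
  rw [mul_assoc, hact, ← mul_assoc, Matrix.nonsing_inv_mul P hP, one_mul]



lemma red_of_trace_comm (ρ : π →* Matrix.SpecialLinearGroup (Fin 2) ℂ)
    (hc : ∀ g h : π, ((ρ (g * h * g⁻¹ * h⁻¹) : M2)).trace = 2) : Red ρ := by
  classical
  by_cases hsc : ∀ g : π, (ρ g : M2) = 1 ∨ (ρ g : M2) = -1
  · refine ⟨Pi.single 0 1, ?_, fun g => ?_⟩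
    · intro h
      have := congrFun h 0
      simp at this
    rcases hsc g with h | h
    · exact ⟨1, by rw [h, Matrix.one_mulVec, one_smul]⟩
    · refine ⟨-1, ?_⟩
      rw [h, Matrix.neg_mulVec, Matrix.one_mulVec, neg_one_smul]
  push_neg at hsc
  obtain ⟨g₀, hg1, hgm1⟩ := hsc
  by_cases hdg : ∃ g₁ : π, (ρ g₁ : M2).trace ≠ 2 ∧ (ρ g₁ : M2).trace ≠ -2
  · -- CASE I : some element with distinct eigenvalues
    obtain ⟨g₁, ht2, htm2⟩ := hdg
    set A : M2 := (ρ g₁ : M2) with hA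
    set t : ℂ := A.trace with ht
    obtain ⟨s, hs⟩ : ∃ s : ℂ, s ^ 2 = t ^ 2 - 4 :=
      IsAlgClosed.exists_pow_nat_eq (t ^ 2 - 4) zero_lt_two
    have hs0 : s ≠ 0 := by
      intro h
      rw [h] at hs
      have h4 : (t - 2) * (t + 2) = 0 := by linear_combination -hs
      rcases mul_eq_zero.1 h4 with h' | h'
      · exact ht2 (by linear_combination h')
      · exact htm2 (by linear_combination h')
    have hlm : (t + s)/2 * ((t - s)/2) = 1 := by
      field_simp
      linear_combination -hs
    have hsum : (t + s)/2 + (t - s)/2 = t := by ring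
    have hne : (t + s)/2 ≠ (t - s)/2 := by
      intro h
      apply hs0
      linear_combination h
    set lam : ℂ := (t + s)/2
    set mu : ℂ := (t - s)/2
    have hdetA1 : A 0 0 * A 1 1 - A 0 1 * A 1 0 = 1 := by
      have := sl_det ρ g₁
      rwa [← hA, Matrix.det_fin_two] at this
    have httr : A 0 0 + A 1 1 = t := by rw [ht, Matrix.trace_fin_two]
    have hrootl : lam ^ 2 - t * lam + 1 = 0 := by
      linear_combination lam * hsum + hlm + hs/2
    have hrootm : mu ^ 2 - t * mu + 1 = 0 := by
      linear_combination mu * hsum + hlm + hs/2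
    have eig : ∀ z : ℂ, z ^ 2 - t * z + 1 = 0 →
        ∃ u : V2, u ≠ 0 ∧ A.mulVec u = z • u := by
      intro z hz
      have hdz : (A - z • 1).det = 0 := by
        rw [Matrix.det_fin_two]
        simp only [Matrix.sub_apply, Matrix.smul_apply, Matrix.one_apply_eq,
          Matrix.one_apply_ne, smul_eq_mul, mul_one, mul_zero, Fin.zero_eq_one_iff,
          Fin.one_eq_zero_iff]
        norm_num
        linear_combination hdetA1 - z * httr + hz
      obtain ⟨u, hu0, hu⟩ := Matrix.exists_mulVec_eq_zero_iff.2 hdz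
      refine ⟨u, hu0, ?_⟩
      rw [Matrix.sub_mulVec, sub_eq_zero, Matrix.smul_mulVec, Matrix.one_mulVec] at hu
      exact hu
    obtain ⟨u₁, hu₁0, hAu₁⟩ := eig lam hrootl
    obtain ⟨u₂, hu₂0, hAu₂⟩ := eig mu hrootm
    have hindep : ∀ a b : ℂ, a • u₁ + b • u₂ = 0 → a = 0 ∧ b = 0 := by
      intro a b hab
      have e1 : A.mulVec (a • u₁ + b • u₂) = 0 := by rw [hab, Matrix.mulVec_zero]
      rw [Matrix.mulVec_add, Matrix.mulVec_smul, Matrix.mulVec_smul, hAu₁, hAu₂] at e1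
      have e2 : (b * (mu - lam)) • u₂ = 0 := by
        calc (b * (mu - lam)) • u₂
            = (a • lam • u₁ + b • mu • u₂) - lam • (a • u₁ + b • u₂) := by module
          _ = 0 := by rw [e1, hab, smul_zero, sub_zero]
      have hb : b = 0 := by
        rcases smul_eq_zero.1 e2 with h' | h'
        · rcases mul_eq_zero.1 h' with h'' | h''
          · exact h''
          · exact absurd (sub_eq_zero.1 h'') (Ne.symm hne)
        · exact absurd h' hu₂0
      refine ⟨?_, hb⟩
      rw [hb, zero_smul, add_zero] at hab
      rcases smul_eq_zero.1 hab with h' | h'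
      · exact h'
      · exact absurd h' hu₁0
    set P : M2 := cm u₁ u₂ with hPdef
    have hPu : IsUnit P.det := cm_isUnit hindep
    have hact : A * P = P * !![lam, 0; 0, mu] := by
      apply ext_mulVec
      intro x
      rw [← Matrix.mulVec_mulVec, ← Matrix.mulVec_mulVec, hPdef, cm_mulVec]
      have hDx : (!![lam, 0; 0, mu] : M2).mulVec x = ![lam * x 0, mu * x 1] := by
        funext i
        fin_cases i <;> simp [Matrix.mulVec, dotProduct, Fin.sum_univ_two]
      rw [hDx, cm_mulVec]
      rw [Matrix.mulVec_add, Matrix.mulVec_smul, Matrix.mulVec_smul, hAu₁, hAu₂]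
      show x 0 • lam • u₁ + x 1 • mu • u₂
        = (![lam * x 0, mu * x 1] : V2) 0 • u₁ + (![lam * x 0, mu * x 1] : V2) 1 • u₂
      simp only [Matrix.cons_val_zero, Matrix.cons_val_one, Matrix.head_cons]
      module
    have hD : mconj ρ P g₁ = !![lam, 0; 0, mu] := mconj_of_colact ρ P hPu g₁ _ hact
    have hDinv : mconj ρ P g₁⁻¹ = !![mu, 0; 0, lam] := by
      rw [mconj_inv ρ P hPu, hD]
      ext i j
      fin_cases i <;> fin_cases j <;> simp
    have key : ∀ h : π, mconj ρ P h 0 1 * mconj ρ P h 1 0 = 0 := by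
      intro h
      have hdetB : mconj ρ P h 0 0 * mconj ρ P h 1 1
          - mconj ρ P h 0 1 * mconj ρ P h 1 0 = 1 := by
        have := mconj_det ρ P hPu h
        rwa [Matrix.det_fin_two] at this
      have hcm := mconj_trace_comm ρ P hPu hc g₁ h
      rw [hD, hDinv, mconj_inv ρ P hPu h] at hcm
      rw [Matrix.eta_fin_two (mconj ρ P h)] at hcm
      exact core_diag lam mu _ _ _ _ hlm hne hdetB hcm
    by_cases hup : ∀ h : π, mconj ρ P h 1 0 = 0
    · exact red_of_upper ρ P hPu hup
    by_cases hlo : ∀ h : π, mconj ρ P h 0 1 = 0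
    · exact red_of_lower ρ P hPu hlo
    exfalso
    push_neg at hup hlo
    obtain ⟨h₁, hh₁⟩ := hup
    obtain ⟨h₂, hh₂⟩ := hlo
    have hb01 : mconj ρ P h₁ 0 1 = 0 := by
      rcases mul_eq_zero.1 (key h₁) with h' | h'
      · exact h'
      · exact absurd h' hh₁
    have hc10 : mconj ρ P h₂ 1 0 = 0 := by
      rcases mul_eq_zero.1 (key h₂) with h' | h'
      · exact absurd h' hh₂
      · exact h'
    have hb11 : mconj ρ P h₁ 1 1 ≠ 0 := by
      intro h'
      have := mconj_det ρ P hPu h₁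
      rw [Matrix.det_fin_two, h', hb01] at this
      simp at this
    have hc11 : mconj ρ P h₂ 1 1 ≠ 0 := by
      intro h'
      have := mconj_det ρ P hPu h₂
      rw [Matrix.det_fin_two, h', hc10] at this
      simp at this
    have hprod := key (h₂ * h₁)
    rw [← mconj_mul ρ P hPu] at hprod
    simp only [Matrix.mul_apply, Fin.sum_univ_two] at hprod
    rw [hb01, hc10] at hprod
    simp only [mul_zero, zero_mul, add_zero, zero_add] at hprod
    rcases mul_eq_zero.1 hprod with h' | h'
    · rcases mul_eq_zero.1 h' with h'' | h''
      · exact hh₂ h''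
      · exact hb11 h''
    · rcases mul_eq_zero.1 h' with h'' | h''
      · exact hc11 h''
      · exact hh₁ h''
  · -- CASE II : all traces are ±2, with a non-scalar element g₀
    push_neg at hdg
    set A : M2 := (ρ g₀ : M2) with hA
    obtain ⟨e, he, htrA⟩ : ∃ e : ℂ, e ^ 2 = 1 ∧ A.trace = 2 * e := by
      by_cases h2 : A.trace = 2
      · exact ⟨1, by norm_num, by rw [h2]; ring⟩
      · exact ⟨-1, by norm_num, by rw [hdg g₀ h2]; ring⟩
    set n : M2 := e • A - 1 with hn
    have hdetA : A.det = 1 := sl_det ρ g₀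
    have hnn : n * n = 0 := by
      ext i j
      rw [hn]
      have hdetA1 : A 0 0 * A 1 1 - A 0 1 * A 1 0 = 1 := by
        rwa [Matrix.det_fin_two] at hdetA
      have httr : A 0 0 + A 1 1 = 2 * e := by
        rwa [Matrix.trace_fin_two] at htrA
      fin_cases i <;> fin_cases j
      all_goals
        simp [Matrix.mul_apply, Fin.sum_univ_two, Matrix.sub_apply, Matrix.smul_apply,
          Matrix.one_apply, smul_eq_mul]
      · linear_combination (A 0 0^2 + A 0 1*A 1 0)*he - hdetA1 + A 0 0*httr
      · linear_combination (A 0 1*(A 0 0 + A 1 1))*he + A 0 1*httr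
      · linear_combination (A 1 0*(A 0 0 + A 1 1))*he + A 1 0*httr
      · linear_combination (A 1 1^2 + A 0 1*A 1 0)*he - hdetA1 + A 1 1*httr
    have he' : e = 1 ∨ e = -1 := by
      have h4 : (e - 1) * (e + 1) = 0 := by linear_combination he
      rcases mul_eq_zero.1 h4 with h' | h'
      · exact Or.inl (by linear_combination h')
      · exact Or.inr (by linear_combination h')
    have hn0 : n ≠ 0 := by
      intro h
      have h1 : e • A = 1 := by
        have := congrArg (fun X => X + (1 : M2)) h
        simpa [hn] using this
      have hAe : A = e • (1 : M2) := by
        have h2 : e • (e • A) = e • (1 : M2) := congrArg (fun X => e • X) h1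
        rwa [smul_smul, ← sq, he, one_smul] at h2
      rcases he' with h' | h'
      · rw [h', one_smul] at hAe; exact hg1 hAe
      · rw [h'] at hAe
        apply hgm1
        rw [hAe, neg_smul, one_smul]
    obtain ⟨u', hu'⟩ : ∃ u' : V2, n.mulVec u' ≠ 0 := by
      by_contra h
      push_neg at h
      apply hn0
      apply ext_mulVec
      intro x
      rw [h x, Matrix.zero_mulVec]
    set u : V2 := n.mulVec u' with hu
    have hnu : n.mulVec u = 0 := by
      rw [hu, Matrix.mulVec_mulVec, hnn, Matrix.zero_mulVec]
    have hindep : ∀ a b : ℂ, a • u + b • u' = 0 → a = 0 ∧ b = 0 := by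
      intro a b hab
      have e1 : n.mulVec (a • u + b • u') = 0 := by rw [hab, Matrix.mulVec_zero]
      rw [Matrix.mulVec_add, Matrix.mulVec_smul, Matrix.mulVec_smul, hnu, ← hu] at e1
      have hb : b = 0 := by
        have e2 : b • u = 0 := by
          rw [smul_zero, zero_add] at e1; exact e1
        rcases smul_eq_zero.1 e2 with h' | h'
        · exact h'
        · exact absurd h' hu'
      refine ⟨?_, hb⟩
      rw [hb, zero_smul, add_zero] at hab
      rcases smul_eq_zero.1 hab with h' | h'
      · exact h'
      · exact absurd h' hu'
    set P : M2 := cm u u' with hPdef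
    have hPu : IsUnit P.det := cm_isUnit hindep
    have hA' : A = e • n + e • (1:M2) := by
      rw [hn, smul_sub, smul_smul, ← sq, he, one_smul]
      abel
    have hAu : A.mulVec u = e • u := by
      rw [hA', Matrix.add_mulVec, Matrix.smul_mulVec, Matrix.smul_mulVec,
        hnu, smul_zero, zero_add, Matrix.one_mulVec]
    have hAu' : A.mulVec u' = e • u + e • u' := by
      rw [hA', Matrix.add_mulVec, Matrix.smul_mulVec, Matrix.smul_mulVec,
        ← hu, Matrix.one_mulVec]
    have hact : A * P = P * !![e, e; 0, e] := by
      apply ext_mulVec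
      intro x
      rw [← Matrix.mulVec_mulVec, ← Matrix.mulVec_mulVec, hPdef, cm_mulVec]
      have hDx : (!![e, e; 0, e] : M2).mulVec x = ![e * x 0 + e * x 1, e * x 1] := by
        funext i
        fin_cases i <;> simp [Matrix.mulVec, dotProduct, Fin.sum_univ_two]
      rw [hDx, cm_mulVec]
      rw [Matrix.mulVec_add, Matrix.mulVec_smul, Matrix.mulVec_smul, hAu, hAu']
      show x 0 • e • u + x 1 • (e • u + e • u')
        = (![e * x 0 + e * x 1, e * x 1] : V2) 0 • u + (![e * x 0 + e * x 1, e * x 1] : V2) 1 • u'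
      simp only [Matrix.cons_val_zero, Matrix.cons_val_one, Matrix.head_cons]
      module
    have hB : mconj ρ P g₀ = !![e, e; 0, e] := mconj_of_colact ρ P hPu g₀ _ hact
    have hBinv : mconj ρ P g₀⁻¹ = !![e, -e; 0, e] := by
      rw [mconj_inv ρ P hPu, hB]
      ext i j
      fin_cases i <;> fin_cases j <;> simp
    apply red_of_upper ρ P hPu
    intro h
    have hdetB : mconj ρ P h 0 0 * mconj ρ P h 1 1
        - mconj ρ P h 0 1 * mconj ρ P h 1 0 = 1 := by
      have := mconj_det ρ P hPu h
      rwa [Matrix.det_fin_two] at this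
    have hcm := mconj_trace_comm ρ P hPu hc g₀ h
    rw [hB, hBinv, mconj_inv ρ P hPu h] at hcm
    rw [Matrix.eta_fin_two (mconj ρ P h)] at hcm
    exact core_unip e _ _ _ _ he hdetB hcm


lemma scalar_one {v : V2} (hv : v ≠ 0) {c : ℂ} (h : c • v = v) : c = 1 := by
  obtain ⟨i, hi⟩ := Function.ne_iff.1 hv
  have := congrFun h i
  simp only [Pi.smul_apply, smul_eq_mul] at this
  have h2 : (c - 1) * v i = 0 := by linear_combination this
  rcases mul_eq_zero.1 h2 with h' | h'
  · linear_combination h'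
  · exact absurd h' hi

lemma not_red' (ρ ρ' : π →* Matrix.SpecialLinearGroup (Fin 2) ℂ)
    (hirr : ¬ Red ρ)
    (htr : ∀ g : π, ((ρ' g : M2)).trace = ((ρ g : M2)).trace) : ¬ Red ρ' := by
  rintro ⟨v, hv0, hvc⟩
  apply hirr
  apply red_of_trace_comm ρ
  intro g h
  rw [← htr (g * h * g⁻¹ * h⁻¹)]
  apply trace_eq_two_of_fixed _ (sl_det ρ' _) v hv0
  obtain ⟨cg, hcg⟩ := hvc g
  obtain ⟨ch, hch⟩ := hvc h
  obtain ⟨cg', hcg'⟩ := hvc g⁻¹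
  obtain ⟨ch', hch'⟩ := hvc h⁻¹
  have hinv : ∀ (a : π) (ca ca' : ℂ), (ρ' a : M2).mulVec v = ca • v →
      (ρ' a⁻¹ : M2).mulVec v = ca' • v → ca * ca' = 1 := by
    intro a ca ca' ha ha'
    have h1 : (ρ' (a * a⁻¹) : M2).mulVec v = (ca * ca') • v := by
      rw [sl_coe_mul, ← Matrix.mulVec_mulVec, ha', Matrix.mulVec_smul, ha,
        smul_smul, mul_comm ca' ca]
    rw [mul_inv_cancel, _root_.map_one] at h1
    rw [show ((1 : Matrix.SpecialLinearGroup (Fin 2) ℂ) : M2) = 1 from rfl,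
      Matrix.one_mulVec] at h1
    exact scalar_one hv0 h1.symm
  have hfix : (ρ' (g * h * g⁻¹ * h⁻¹) : M2).mulVec v = ((cg * cg') * (ch * ch')) • v := by
    rw [sl_coe_mul ρ' (g * h * g⁻¹) h⁻¹, sl_coe_mul ρ' (g * h) g⁻¹, sl_coe_mul ρ' g h]
    rw [← Matrix.mulVec_mulVec, hch', Matrix.mulVec_smul, ← Matrix.mulVec_mulVec, hcg',
      Matrix.mulVec_smul, ← Matrix.mulVec_mulVec, hch, Matrix.mulVec_smul, hcg]
    rw [smul_smul, smul_smul, smul_smul]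
    congr 1
    ring
  rw [hfix, hinv g cg cg' hcg hcg', hinv h ch ch' hch hch', one_mul, one_smul]



end Stmt16Aux

open Stmt16Aux in


/-- Let `π` be a finitely generated group and `ρ, ρ̃ : π → SL(2,ℂ)` representations with `ρ`
irreducible. If `tr(ρ̃(g)) = tr(ρ(g))` for every `g ∈ π`, then `ρ̃` is `GL(2,ℂ)`-conjugate
to `ρ`. -/
theorem stmt16 (π : Type*) [Group π] [Group.FG π]
    (ρ ρ' : π →* Matrix.SpecialLinearGroup (Fin 2) ℂ)
    (hirr : ¬ ∃ v : Fin 2 → ℂ, v ≠ 0 ∧ ∀ g : π, ∃ c : ℂ,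
        Matrix.mulVec (ρ g : Matrix (Fin 2) (Fin 2) ℂ) v = c • v)
    (htr : ∀ g : π, (ρ' g : Matrix (Fin 2) (Fin 2) ℂ).trace
      = (ρ g : Matrix (Fin 2) (Fin 2) ℂ).trace) :
    ∃ T : Matrix.GeneralLinearGroup (Fin 2) ℂ, ∀ g : π,
      (ρ' g : Matrix (Fin 2) (Fin 2) ℂ) =
        (T : Matrix (Fin 2) (Fin 2) ℂ) * (ρ g : Matrix (Fin 2) (Fin 2) ℂ)
          * ((T⁻¹ : Matrix.GeneralLinearGroup (Fin 2) ℂ) : Matrix (Fin 2) (Fin 2) ℂ) := by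
  have hirr2 : ¬ Red ρ := hirr
  have hirr' : ¬ Red ρ' := not_red' ρ ρ' hirr2 htr
  obtain ⟨T0, hdet, hcomm⟩ := main_conj ρ ρ' hirr2 hirr' htr
  have hU : IsUnit T0 := (Matrix.isUnit_iff_isUnit_det T0).2 hdet
  refine ⟨hU.unit, fun g => ?_⟩
  have hval : (hU.unit : Matrix (Fin 2) (Fin 2) ℂ) = T0 := hU.unit_spec
  have h1 : T0 * ((hU.unit⁻¹ : (Matrix (Fin 2) (Fin 2) ℂ)ˣ) : Matrix (Fin 2) (Fin 2) ℂ) = 1 := by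
    exact hU.mul_val_inv
  rw [hval, ← hcomm g, mul_assoc, h1, mul_one]
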